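/- Let a₁, a₂, a₃, a₄ be real numbers, set Q = a₁x₁ + a₂x₂ + a₃x₃ + a₄x₄ and P = (x₁ + x₂ − x₃ − x₄) · Q. Suppose that n(P) ≤ 6 and that Q(x) > 0 whenever x₁ + x₂ > x₃ + x₄ and x_i > 0 for all i = 1, 2, 3, 4. Then Q is a positive scalar multiple of one of the following nine linear forms: x₁, x₂, x₃, x₄, x₁ + x₃, x₁ + x₄, x₂ + x₃, x₂ + x₄, x₁ + x₂ + x₃ + x₄. -/

import Mathlib

open MvPolynomial

noncomputable def Dd : Fin 10 → (Fin 4 →₀ ℕ)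
  | 0 => Finsupp.single 0 2
  | 1 => Finsupp.single 1 2
  | 2 => Finsupp.single 2 2
  | 3 => Finsupp.single 3 2
  | 4 => Finsupp.single 0 1 + Finsupp.single 1 1
  | 5 => Finsupp.single 0 1 + Finsupp.single 2 1
  | 6 => Finsupp.single 0 1 + Finsupp.single 3 1
  | 7 => Finsupp.single 1 1 + Finsupp.single 2 1
  | 8 => Finsupp.single 1 1 + Finsupp.single 3 1
  | 9 => Finsupp.single 2 1 + Finsupp.single 3 1

def cc (a : Fin 4 → ℝ) : Fin 10 → ℝ
  | 0 => a 0
  | 1 => a 1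
  | 2 => -a 2
  | 3 => -a 3
  | 4 => a 0 + a 1
  | 5 => a 2 - a 0
  | 6 => a 3 - a 0
  | 7 => a 2 - a 1
  | 8 => a 3 - a 1
  | 9 => -(a 2 + a 3)

def Vv : Fin 10 → (Fin 4 → ℕ)
  | 0 => ![2,0,0,0]
  | 1 => ![0,2,0,0]
  | 2 => ![0,0,2,0]
  | 3 => ![0,0,0,2]
  | 4 => ![1,1,0,0]
  | 5 => ![1,0,1,0]
  | 6 => ![1,0,0,1]
  | 7 => ![0,1,1,0]
  | 8 => ![0,1,0,1]
  | 9 => ![0,0,1,1]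

lemma hDV : ∀ k, ⇑(Dd k) = Vv k := by
  intro k
  fin_cases k <;> funext i <;> fin_cases i <;>
    simp [Dd, Vv, Finsupp.add_apply, Finsupp.single_apply]

lemma Dd_inj : Function.Injective Dd := by
  have hV : Function.Injective Vv := by decide
  intro k l h
  exact hV (by rw [← hDV, ← hDV, h])

lemma mono2 (i : Fin 4) (c : ℝ) :
    (monomial (Finsupp.single i 2) c : MvPolynomial (Fin 4) ℝ) = C c * X i ^ 2 := by
  rw [X_pow_eq_monomial, C_mul_monomial, mul_one]

lemma mono11 (i j : Fin 4) (c : ℝ) :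
    (monomial (Finsupp.single i 1 + Finsupp.single j 1) c : MvPolynomial (Fin 4) ℝ)
      = C c * (X i * X j) := by
  rw [X, X, monomial_mul, one_mul, C_mul_monomial, mul_one]

lemma coeff_Dd (a : Fin 4 → ℝ)
    (Q : MvPolynomial (Fin 4) ℝ) (hQ : Q = ∑ i : Fin 4, C (a i) * X i) :
    ∀ k, coeff (Dd k) ((X 0 + X 1 - X 2 - X 3 : MvPolynomial (Fin 4) ℝ) * Q) = cc a k := by
  have hP : (X 0 + X 1 - X 2 - X 3 : MvPolynomial (Fin 4) ℝ) * Q =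
      monomial (Dd 0) (a 0) + monomial (Dd 1) (a 1) + monomial (Dd 2) (-a 2) +
      monomial (Dd 3) (-a 3) + monomial (Dd 4) (a 0 + a 1) + monomial (Dd 5) (a 2 - a 0) +
      monomial (Dd 6) (a 3 - a 0) + monomial (Dd 7) (a 2 - a 1) + monomial (Dd 8) (a 3 - a 1) +
      monomial (Dd 9) (-(a 2 + a 3)) := by
    rw [hQ, Fin.sum_univ_four]
    simp only [Dd, mono2, mono11, map_add, map_sub, map_neg]
    ring
  intro k
  rw [hP]
  fin_cases k <;>
    simp only [Dd, cc, coeff_add, coeff_monomial, Finsupp.ext_iff, Finsupp.add_apply,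
      Finsupp.single_apply, Fin.forall_fin_succ] <;>
    simp (config := { decide := true })

lemma nonneg_of_linear (b s : ℝ) (h : ∀ t : ℝ, 2 ≤ t → 0 < b * t + s) : 0 ≤ b := by
  by_contra hb
  push_neg at hb
  have h1 := h (max 2 (s / (-b))) (le_max_left _ _)
  have h2 : b * max 2 (s / (-b)) ≤ b * (s / (-b)) :=
    mul_le_mul_of_nonpos_left (le_max_right _ _) hb.le
  have h4 := div_mul_cancel₀ s (show (-b) ≠ 0 by linarith)
  linarith

set_option maxHeartbeats 2000000 in
/-- Let `Q = a₁x₁ + a₂x₂ + a₃x₃ + a₄x₄` and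
`P = (x₁ + x₂ − x₃ − x₄) * Q`. If `P` has at most `6` monomials and `Q(x) > 0` whenever
`x₁ + x₂ > x₃ + x₄` with all `xᵢ > 0`, then `Q` is a positive scalar multiple of one of
`x₁, x₂, x₃, x₄, x₁+x₃, x₁+x₄, x₂+x₃, x₂+x₄, x₁+x₂+x₃+x₄`. -/
theorem statement6 (a : Fin 4 → ℝ)
    (Q : MvPolynomial (Fin 4) ℝ) (hQ : Q = ∑ i : Fin 4, C (a i) * X i)
    (hcard : (((X 0 + X 1 - X 2 - X 3 : MvPolynomial (Fin 4) ℝ) * Q).support).card ≤ 6)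
    (hpos : ∀ x : Fin 4 → ℝ, (∀ i, 0 < x i) → x 2 + x 3 < x 0 + x 1 → 0 < eval x Q) :
    ∃ c : ℝ, 0 < c ∧
      (Q = C c * X 0 ∨ Q = C c * X 1 ∨ Q = C c * X 2 ∨ Q = C c * X 3 ∨
       Q = C c * (X 0 + X 2) ∨ Q = C c * (X 0 + X 3) ∨
       Q = C c * (X 1 + X 2) ∨ Q = C c * (X 1 + X 3) ∨
       Q = C c * (X 0 + X 1 + X 2 + X 3)) := by
  -- counting machinery
  have hcoeff := coeff_Dd a Q hQ
  have hcount : (Finset.univ.filter fun k => cc a k ≠ 0).card ≤ 6 := by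
    have hle : (Finset.univ.filter fun k => cc a k ≠ 0).card ≤
        (((X 0 + X 1 - X 2 - X 3 : MvPolynomial (Fin 4) ℝ) * Q).support).card := by
      apply Finset.card_le_card_of_injOn Dd
      · intro k hk
        rw [Finset.mem_coe, mem_support_iff, hcoeff k]
        exact (Finset.mem_filter.1 (Finset.mem_coe.1 hk)).2
      · exact fun k _ l _ h => Dd_inj h
    exact hle.trans hcard
  have seven : ∀ s : Finset (Fin 10), 7 ≤ s.card → (∀ k ∈ s, cc a k ≠ 0) → False := by
    intro s hs h
    have hsub : s ⊆ Finset.univ.filter fun k => cc a k ≠ 0 :=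
      fun k hk => Finset.mem_filter.2 ⟨Finset.mem_univ k, h k hk⟩
    have := Finset.card_le_card hsub
    omega
  -- positivity facts
  have heval : ∀ x : Fin 4 → ℝ, eval x Q = a 0 * x 0 + a 1 * x 1 + a 2 * x 2 + a 3 * x 3 := by
    intro x
    rw [hQ, Fin.sum_univ_four]
    simp
  have e0 : 0 ≤ a 0 := by
    apply nonneg_of_linear _ (a 1 + a 2 + a 3)
    intro t ht
    have := hpos ![t, 1, 1, 1] (by intro i; fin_cases i <;> simp <;> linarith)
      (by simp <;> linarith)
    rw [heval] at this
    simp at this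
    linarith
  have e1 : 0 ≤ a 1 := by
    apply nonneg_of_linear _ (a 0 + a 2 + a 3)
    intro t ht
    have := hpos ![1, t, 1, 1] (by intro i; fin_cases i <;> simp <;> linarith)
      (by simp <;> linarith)
    rw [heval] at this
    simp at this
    linarith
  have e02 : 0 ≤ a 0 + a 2 := by
    apply nonneg_of_linear _ (a 0 + a 1 + a 3)
    intro t ht
    have := hpos ![t + 1, 1, t, 1] (by intro i; fin_cases i <;> simp <;> linarith)
      (by simp <;> linarith)
    rw [heval] at this
    simp at this
    nlinarith
  have e03 : 0 ≤ a 0 + a 3 := by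
    apply nonneg_of_linear _ (a 0 + a 1 + a 2)
    intro t ht
    have := hpos ![t + 1, 1, 1, t] (by intro i; fin_cases i <;> simp <;> linarith)
      (by simp <;> linarith)
    rw [heval] at this
    simp at this
    nlinarith
  have e12 : 0 ≤ a 1 + a 2 := by
    apply nonneg_of_linear _ (a 0 + a 1 + a 3)
    intro t ht
    have := hpos ![1, t + 1, t, 1] (by intro i; fin_cases i <;> simp <;> linarith)
      (by simp <;> linarith)
    rw [heval] at this
    simp at this
    nlinarith
  have e13 : 0 ≤ a 1 + a 3 := by
    apply nonneg_of_linear _ (a 0 + a 1 + a 2)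
    intro t ht
    have := hpos ![1, t + 1, 1, t] (by intro i; fin_cases i <;> simp <;> linarith)
      (by simp <;> linarith)
    rw [heval] at this
    simp at this
    nlinarith
  have hsum : 0 < 2 * a 0 + a 1 + a 2 + a 3 := by
    have := hpos ![2, 1, 1, 1] (by intro i; fin_cases i <;> norm_num)
      (by simp <;> norm_num)
    rw [heval] at this
    simp at this
    linarith
  -- main case analysis
  rcases e0.eq_or_lt with h0 | h0 <;> rcases e1.eq_or_lt with h1 | h1
  · -- a 0 = 0, a 1 = 0
    have ea2 : 0 ≤ a 2 := by linarith
    have ea3 : 0 ≤ a 3 := by linarith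
    rcases ea2.eq_or_lt with h2 | h2 <;> rcases ea3.eq_or_lt with h3 | h3
    · exfalso; linarith
    · -- Q = a 3 * X 3
      refine ⟨a 3, h3, Or.inr (Or.inr (Or.inr (Or.inl ?_)))⟩
      rw [hQ, Fin.sum_univ_four, ← h0, ← h1, ← h2]
      simp only [C_0, zero_mul, zero_add]
    · -- Q = a 2 * X 2
      refine ⟨a 2, h2, Or.inr (Or.inr (Or.inl ?_))⟩
      rw [hQ, Fin.sum_univ_four, ← h0, ← h1, ← h3]
      simp only [C_0, zero_mul, zero_add, add_zero]
    · -- both positive: contradiction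
      exfalso
      apply seven {2, 3, 5, 6, 7, 8, 9} (by decide)
      intro k hk
      have n2 : a 2 ≠ 0 := h2.ne'
      have n3 : a 3 ≠ 0 := h3.ne'
      have n5 : a 2 - a 0 ≠ 0 := by intro h; apply n2; linarith
      have n6 : a 3 - a 0 ≠ 0 := by intro h; apply n3; linarith
      have n7 : a 2 - a 1 ≠ 0 := by intro h; apply n2; linarith
      have n8 : a 3 - a 1 ≠ 0 := by intro h; apply n3; linarith
      have n9 : a 2 + a 3 ≠ 0 := by intro h; linarith
      fin_cases hk <;> simp only [cc, ne_eq, neg_eq_zero] <;> assumption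
  · -- a 0 = 0, 0 < a 1
    have ea2 : 0 ≤ a 2 := by linarith
    have ea3 : 0 ≤ a 3 := by linarith
    rcases ea2.eq_or_lt with h2 | h2 <;> rcases ea3.eq_or_lt with h3 | h3
    · -- Q = a 1 * X 1
      refine ⟨a 1, h1, Or.inr (Or.inl ?_)⟩
      rw [hQ, Fin.sum_univ_four, ← h0, ← h2, ← h3]
      simp only [C_0, zero_mul, zero_add, add_zero]
    · -- a 2 = 0, 0 < a 3 : need a 3 = a 1, conclusion X 1 + X 3
      have key : a 3 = a 1 := by
        by_contra hcon
        apply seven {1, 3, 4, 6, 7, 8, 9} (by decide)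
        intro k hk
        have n1 : a 1 ≠ 0 := h1.ne'
        have n3 : a 3 ≠ 0 := h3.ne'
        have n4 : a 0 + a 1 ≠ 0 := by intro h; linarith
        have n6 : a 3 - a 0 ≠ 0 := by intro h; apply n3; linarith
        have n7 : a 2 - a 1 ≠ 0 := by intro h; apply n1; linarith
        have n8 : a 3 - a 1 ≠ 0 := sub_ne_zero.2 hcon
        have n9 : a 2 + a 3 ≠ 0 := by intro h; apply n3; linarith
        fin_cases hk <;> simp only [cc, ne_eq, neg_eq_zero] <;> assumption
      refine ⟨a 1, h1, Or.inr (Or.inr (Or.inr (Or.inr (Or.inr (Or.inr (Or.inr (Or.inl ?_)))))))⟩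
      rw [hQ, Fin.sum_univ_four, ← h0, ← h2, key]
      simp only [C_0, zero_mul, zero_add, add_zero, mul_add]
    · -- 0 < a 2, a 3 = 0 : need a 2 = a 1, conclusion X 1 + X 2
      have key : a 2 = a 1 := by
        by_contra hcon
        apply seven {1, 2, 4, 5, 7, 8, 9} (by decide)
        intro k hk
        have n1 : a 1 ≠ 0 := h1.ne'
        have n2 : a 2 ≠ 0 := h2.ne'
        have n4 : a 0 + a 1 ≠ 0 := by intro h; linarith
        have n5 : a 2 - a 0 ≠ 0 := by intro h; apply n2; linarith
        have n7 : a 2 - a 1 ≠ 0 := sub_ne_zero.2 hcon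
        have n8 : a 3 - a 1 ≠ 0 := by intro h; apply n1; linarith
        have n9 : a 2 + a 3 ≠ 0 := by intro h; apply n2; linarith
        fin_cases hk <;> simp only [cc, ne_eq, neg_eq_zero] <;> assumption
      refine ⟨a 1, h1, Or.inr (Or.inr (Or.inr (Or.inr (Or.inr (Or.inr (Or.inl ?_))))))⟩
      rw [hQ, Fin.sum_univ_four, ← h0, ← h3, key]
      simp only [C_0, zero_mul, zero_add, add_zero, mul_add]
    · -- both positive : contradiction
      exfalso
      apply seven {1, 2, 3, 4, 5, 6, 9} (by decide)
      intro k hk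
      have n1 : a 1 ≠ 0 := h1.ne'
      have n2 : a 2 ≠ 0 := h2.ne'
      have n3 : a 3 ≠ 0 := h3.ne'
      have n4 : a 0 + a 1 ≠ 0 := by intro h; linarith
      have n5 : a 2 - a 0 ≠ 0 := by intro h; apply n2; linarith
      have n6 : a 3 - a 0 ≠ 0 := by intro h; apply n3; linarith
      have n9 : a 2 + a 3 ≠ 0 := by intro h; linarith
      fin_cases hk <;> simp only [cc, ne_eq, neg_eq_zero] <;> assumption
  · -- 0 < a 0, a 1 = 0
    have ea2 : 0 ≤ a 2 := by linarith
    have ea3 : 0 ≤ a 3 := by linarith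
    rcases ea2.eq_or_lt with h2 | h2 <;> rcases ea3.eq_or_lt with h3 | h3
    · -- Q = a 0 * X 0
      refine ⟨a 0, h0, Or.inl ?_⟩
      rw [hQ, Fin.sum_univ_four, ← h1, ← h2, ← h3]
      simp only [C_0, zero_mul, add_zero]
    · -- a 2 = 0, 0 < a 3 : need a 3 = a 0, conclusion X 0 + X 3
      have key : a 3 = a 0 := by
        by_contra hcon
        apply seven {0, 3, 4, 5, 6, 8, 9} (by decide)
        intro k hk
        have n0 : a 0 ≠ 0 := h0.ne'
        have n3 : a 3 ≠ 0 := h3.ne'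
        have n4 : a 0 + a 1 ≠ 0 := by intro h; linarith
        have n5 : a 2 - a 0 ≠ 0 := by intro h; apply n0; linarith
        have n6 : a 3 - a 0 ≠ 0 := sub_ne_zero.2 hcon
        have n8 : a 3 - a 1 ≠ 0 := by intro h; apply n3; linarith
        have n9 : a 2 + a 3 ≠ 0 := by intro h; apply n3; linarith
        fin_cases hk <;> simp only [cc, ne_eq, neg_eq_zero] <;> assumption
      refine ⟨a 0, h0, Or.inr (Or.inr (Or.inr (Or.inr (Or.inr (Or.inl ?_)))))⟩
      rw [hQ, Fin.sum_univ_four, ← h1, ← h2, key]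
      simp only [C_0, zero_mul, zero_add, add_zero, mul_add]
    · -- 0 < a 2, a 3 = 0 : need a 2 = a 0, conclusion X 0 + X 2
      have key : a 2 = a 0 := by
        by_contra hcon
        apply seven {0, 2, 4, 5, 6, 7, 9} (by decide)
        intro k hk
        have n0 : a 0 ≠ 0 := h0.ne'
        have n2 : a 2 ≠ 0 := h2.ne'
        have n4 : a 0 + a 1 ≠ 0 := by intro h; linarith
        have n5 : a 2 - a 0 ≠ 0 := sub_ne_zero.2 hcon
        have n6 : a 3 - a 0 ≠ 0 := by intro h; apply n0; linarith
        have n7 : a 2 - a 1 ≠ 0 := by intro h; apply n2; linarith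
        have n9 : a 2 + a 3 ≠ 0 := by intro h; apply n2; linarith
        fin_cases hk <;> simp only [cc, ne_eq, neg_eq_zero] <;> assumption
      refine ⟨a 0, h0, Or.inr (Or.inr (Or.inr (Or.inr (Or.inl ?_))))⟩
      rw [hQ, Fin.sum_univ_four, ← h1, ← h3, key]
      simp only [C_0, zero_mul, zero_add, add_zero, mul_add]
    · -- both positive : contradiction
      exfalso
      apply seven {0, 2, 3, 4, 7, 8, 9} (by decide)
      intro k hk
      have n0 : a 0 ≠ 0 := h0.ne'
      have n2 : a 2 ≠ 0 := h2.ne'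
      have n3 : a 3 ≠ 0 := h3.ne'
      have n4 : a 0 + a 1 ≠ 0 := by intro h; linarith
      have n7 : a 2 - a 1 ≠ 0 := by intro h; apply n2; linarith
      have n8 : a 3 - a 1 ≠ 0 := by intro h; apply n3; linarith
      have n9 : a 2 + a 3 ≠ 0 := by intro h; linarith
      fin_cases hk <;> simp only [cc, ne_eq, neg_eq_zero] <;> assumption
  · -- 0 < a 0, 0 < a 1
    have n0 : a 0 ≠ 0 := h0.ne'
    have n1 : a 1 ≠ 0 := h1.ne'
    have n4 : a 0 + a 1 ≠ 0 := by intro h; linarith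
    by_cases h2 : a 2 = 0 <;> by_cases h3 : a 3 = 0
    · -- a 2 = 0, a 3 = 0 : contradiction
      exfalso
      apply seven {0, 1, 4, 5, 6, 7, 8} (by decide)
      intro k hk
      have n5 : a 2 - a 0 ≠ 0 := by intro h; apply n0; linarith
      have n6 : a 3 - a 0 ≠ 0 := by intro h; apply n0; linarith
      have n7 : a 2 - a 1 ≠ 0 := by intro h; apply n1; linarith
      have n8 : a 3 - a 1 ≠ 0 := by intro h; apply n1; linarith
      fin_cases hk <;> simp only [cc, ne_eq, neg_eq_zero] <;> assumption
    · -- a 2 = 0, a 3 ≠ 0 : contradiction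
      exfalso
      apply seven {0, 1, 3, 4, 5, 7, 9} (by decide)
      intro k hk
      have n3 : a 3 ≠ 0 := h3
      have n5 : a 2 - a 0 ≠ 0 := by intro h; apply n0; linarith
      have n7 : a 2 - a 1 ≠ 0 := by intro h; apply n1; linarith
      have n9 : a 2 + a 3 ≠ 0 := by intro h; apply h3; linarith
      fin_cases hk <;> simp only [cc, ne_eq, neg_eq_zero] <;> assumption
    · -- a 2 ≠ 0, a 3 = 0 : contradiction
      exfalso
      apply seven {0, 1, 2, 4, 6, 8, 9} (by decide)
      intro k hk
      have n2 : a 2 ≠ 0 := h2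
      have n6 : a 3 - a 0 ≠ 0 := by intro h; apply n0; linarith
      have n8 : a 3 - a 1 ≠ 0 := by intro h; apply n1; linarith
      have n9 : a 2 + a 3 ≠ 0 := by intro h; apply h2; linarith
      fin_cases hk <;> simp only [cc, ne_eq, neg_eq_zero] <;> assumption
    · -- a 2 ≠ 0, a 3 ≠ 0 : all equal
      have p56 : a 2 = a 0 ∨ a 3 = a 0 := by
        by_contra hcon
        push_neg at hcon
        apply seven {0, 1, 2, 3, 4, 5, 6} (by decide)
        intro k hk
        have n5 : a 2 - a 0 ≠ 0 := sub_ne_zero.2 hcon.1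
        have n6 : a 3 - a 0 ≠ 0 := sub_ne_zero.2 hcon.2
        fin_cases hk <;> simp only [cc, ne_eq, neg_eq_zero] <;> assumption
      have p57 : a 2 = a 0 ∨ a 2 = a 1 := by
        by_contra hcon
        push_neg at hcon
        apply seven {0, 1, 2, 3, 4, 5, 7} (by decide)
        intro k hk
        have n5 : a 2 - a 0 ≠ 0 := sub_ne_zero.2 hcon.1
        have n7 : a 2 - a 1 ≠ 0 := sub_ne_zero.2 hcon.2
        fin_cases hk <;> simp only [cc, ne_eq, neg_eq_zero] <;> assumption
      have p58 : a 2 = a 0 ∨ a 3 = a 1 := by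
        by_contra hcon
        push_neg at hcon
        apply seven {0, 1, 2, 3, 4, 5, 8} (by decide)
        intro k hk
        have n5 : a 2 - a 0 ≠ 0 := sub_ne_zero.2 hcon.1
        have n8 : a 3 - a 1 ≠ 0 := sub_ne_zero.2 hcon.2
        fin_cases hk <;> simp only [cc, ne_eq, neg_eq_zero] <;> assumption
      have p67 : a 3 = a 0 ∨ a 2 = a 1 := by
        by_contra hcon
        push_neg at hcon
        apply seven {0, 1, 2, 3, 4, 6, 7} (by decide)
        intro k hk
        have n6 : a 3 - a 0 ≠ 0 := sub_ne_zero.2 hcon.1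
        have n7 : a 2 - a 1 ≠ 0 := sub_ne_zero.2 hcon.2
        fin_cases hk <;> simp only [cc, ne_eq, neg_eq_zero] <;> assumption
      have p68 : a 3 = a 0 ∨ a 3 = a 1 := by
        by_contra hcon
        push_neg at hcon
        apply seven {0, 1, 2, 3, 4, 6, 8} (by decide)
        intro k hk
        have n6 : a 3 - a 0 ≠ 0 := sub_ne_zero.2 hcon.1
        have n8 : a 3 - a 1 ≠ 0 := sub_ne_zero.2 hcon.2
        fin_cases hk <;> simp only [cc, ne_eq, neg_eq_zero] <;> assumption
      have p78 : a 2 = a 1 ∨ a 3 = a 1 := by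
        by_contra hcon
        push_neg at hcon
        apply seven {0, 1, 2, 3, 4, 7, 8} (by decide)
        intro k hk
        have n7 : a 2 - a 1 ≠ 0 := sub_ne_zero.2 hcon.1
        have n8 : a 3 - a 1 ≠ 0 := sub_ne_zero.2 hcon.2
        fin_cases hk <;> simp only [cc, ne_eq, neg_eq_zero] <;> assumption
      have key : a 1 = a 0 ∧ a 2 = a 0 ∧ a 3 = a 0 := by
        rcases p56 with q1 | q1 <;> rcases p57 with q2 | q2 <;> rcases p58 with q3 | q3 <;>
          rcases p67 with q4 | q4 <;> rcases p68 with q5 | q5 <;> rcases p78 with q6 | q6 <;>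
          exact ⟨by linarith, by linarith, by linarith⟩
      refine ⟨a 0, h0, Or.inr (Or.inr (Or.inr (Or.inr (Or.inr (Or.inr (Or.inr (Or.inr ?_)))))))⟩
      rw [hQ, Fin.sum_univ_four, key.1, key.2.1, key.2.2]
      ring
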